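/- Proposition (continuity of optimal posteriors) fails in general: there exist finite 𝒳 = 𝒴 = {0,1}, two sequences of joint distributions (p_n) and (p'_n) both converging to the same limit p₀, with unique optimal decision rules q_n, q'_n (the posteriors), such that q_n(1|1) = 1 for all n while q'_n(1|1) = 0 for all n; hence no single decision rule q₀ can be the limit of both sequences of optimal rules. -/

import Mathlib

open scoped BigOperators

/-- The sequence `p_n` of joint distributions on `{0,1}²`. -/
noncomputable def pseq (n : ℕ) : Fin 2 × Fin 2 → ℝ := fun a =>
  if a = (0, 0) then 1/2
  else if a = (0, 1) then ((n : ℝ) - 1) / (2 * n)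
  else if a = (1, 0) then 0
  else 1 / (2 * n)

/-- The sequence `p'_n` of joint distributions on `{0,1}²`. -/
noncomputable def pseq' (n : ℕ) : Fin 2 × Fin 2 → ℝ := fun a =>
  if a = (0, 0) then ((n : ℝ) - 1) / (2 * n)
  else if a = (0, 1) then 1/2
  else if a = (1, 0) then 1 / (2 * n)
  else 0

/-- The common limit distribution `p₀`. -/
noncomputable def plim : Fin 2 × Fin 2 → ℝ := fun a => if a.1 = 0 then 1/2 else 0

/-- The posterior (optimal decision rule) `q_n(y|x) = p_n(x,y)/p_n(x)`. -/
noncomputable def qseq (n : ℕ) : Fin 2 → Fin 2 → ℝ :=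
  fun x y => pseq n (x, y) / ∑ y', pseq n (x, y')

/-- The posterior (optimal decision rule) `q'_n(y|x) = p'_n(x,y)/p'_n(x)`. -/
noncomputable def qseq' (n : ℕ) : Fin 2 → Fin 2 → ℝ :=
  fun x y => pseq' n (x, y) / ∑ y', pseq' n (x, y')

lemma aux_zero : Filter.Tendsto (fun n : ℕ => 1 / (2 * (n : ℝ))) Filter.atTop (nhds 0) := by
  have h : Filter.Tendsto (fun n : ℕ => (2 * (n : ℝ))) Filter.atTop Filter.atTop :=
    Filter.Tendsto.const_mul_atTop (by norm_num) tendsto_natCast_atTop_atTop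
  have h2 : Filter.Tendsto (fun n : ℕ => (2 * (n : ℝ))⁻¹) Filter.atTop (nhds 0) :=
    h.inv_tendsto_atTop
  simp only [one_div]
  exact h2

lemma aux_half : Filter.Tendsto (fun n : ℕ => ((n : ℝ) - 1) / (2 * n)) Filter.atTop
    (nhds (1/2)) := by
  have h := (tendsto_const_nhds (x := (1:ℝ)/2) (f := Filter.atTop (α := ℕ))).sub aux_zero
  rw [sub_zero] at h
  refine h.congr' ?_
  filter_upwards [Filter.eventually_gt_atTop 0] with n hn
  have hn' : (2 * (n : ℝ)) ≠ 0 := by positivity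
  field_simp

theorem posterior_continuity_fails :
    Filter.Tendsto pseq Filter.atTop (nhds plim) ∧
    Filter.Tendsto pseq' Filter.atTop (nhds plim) ∧
    (∀ n : ℕ, 1 ≤ n → qseq n 1 1 = 1 ∧ qseq' n 1 1 = 0) ∧
    ¬ ∃ q₀ : Fin 2 → Fin 2 → ℝ,
        Filter.Tendsto qseq Filter.atTop (nhds q₀) ∧
        Filter.Tendsto qseq' Filter.atTop (nhds q₀) := by
  have hq : ∀ n : ℕ, 1 ≤ n → qseq n 1 1 = 1 ∧ qseq' n 1 1 = 0 := by
    intro n hn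
    have hn' : (2 * (n : ℝ)) ≠ 0 := by
      have : (0:ℝ) < n := by exact_mod_cast hn
      positivity
    have hn0 : (n:ℝ) ≠ 0 := by
      have : (0:ℝ) < n := by exact_mod_cast hn
      linarith
    constructor
    · simp only [qseq, pseq, Fin.sum_univ_two]
      norm_num [Prod.ext_iff]
      omega
    · simp only [qseq', pseq', Fin.sum_univ_two]
      norm_num [Prod.ext_iff]
  refine ⟨?_, ?_, hq, ?_⟩
  · rw [tendsto_pi_nhds]
    rintro ⟨x, y⟩
    fin_cases x <;> fin_cases y <;>
      norm_num [pseq, plim, Prod.ext_iff]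
    · exact aux_half
    · simpa [one_div, mul_inv, mul_comm] using aux_zero
  · rw [tendsto_pi_nhds]
    rintro ⟨x, y⟩
    fin_cases x <;> fin_cases y <;>
      norm_num [pseq', plim, Prod.ext_iff]
    · exact aux_half
    · simpa [one_div, mul_inv, mul_comm] using aux_zero
  · rintro ⟨q₀, h1, h2⟩
    have e1 : Filter.Tendsto (fun n => qseq n 1 1) Filter.atTop (nhds (q₀ 1 1)) :=
      tendsto_pi_nhds.mp (tendsto_pi_nhds.mp h1 1) 1
    have e2 : Filter.Tendsto (fun n => qseq' n 1 1) Filter.atTop (nhds (q₀ 1 1)) :=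
      tendsto_pi_nhds.mp (tendsto_pi_nhds.mp h2 1) 1
    have c1 : q₀ 1 1 = 1 := by
      refine tendsto_nhds_unique (e1.congr' ?_) tendsto_const_nhds
      filter_upwards [Filter.eventually_ge_atTop 1] with n hn
      exact (hq n hn).1
    have c2 : q₀ 1 1 = 0 := by
      refine tendsto_nhds_unique (e2.congr' ?_) tendsto_const_nhds
      filter_upwards [Filter.eventually_ge_atTop 1] with n hn
      exact (hq n hn).2
    rw [c1] at c2
    norm_num at c2
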